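/- arXiv:1805.05369 — 2 statements merged into one kernel-verified Lean document; each statement's English description precedes it below -/
import Mathlib

section
/- For any integer d ≥ 2, the first group cohomology H¹(S_d, T_d) vanishes, where T_d = ℤ^d is the standard permutation representation of the symmetric group S_d, acting by τ·e_i = e_{τ(i)} on the canonical basis. -/
open groupCohomology Equiv Equiv.Perm

/-- For `d ≥ 2`, `H¹(S_d, T_d) = 0`, where `T_d = ℤ^d` is the standard permutation
representation of `S_d` (the free `ℤ`-module on `Fin d` with `τ • e_i = e_{τ i}`). -/
theorem stmt_2 (d : ℕ) (hd : 2 ≤ d) :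
    Subsingleton
      (groupCohomology.H1 (Rep.ofMulAction ℤ (Equiv.Perm (Fin d)) (Fin d))) := by
  refine ⟨fun x y => ?_⟩
  suffices hz : ∀ z : H1 (Rep.ofMulAction ℤ (Equiv.Perm (Fin d)) (Fin d)), z = 0 by
    rw [hz x, hz y]
  intro z
  refine H1_induction_on z fun f => ?_
  rw [H1π_eq_zero_iff]
  suffices hex : ∃ x : MonoidAlgebra ℤ (Fin d), ∀ g : Equiv.Perm (Fin d),
      Representation.ofMulAction ℤ (Equiv.Perm (Fin d)) (Fin d) g x - x = f g by
    obtain ⟨x, hx⟩ := hex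
    refine ⟨x, ?_⟩
    funext g
    rw [d₀₁_hom_apply]
    exact hx g
  set ρ := Representation.ofMulAction ℤ (Equiv.Perm (Fin d)) (Fin d) with hρdef
  set F : Equiv.Perm (Fin d) → MonoidAlgebra ℤ (Fin d) := fun g => f g with hFdef
  have hρ : ∀ (g : Equiv.Perm (Fin d)) (v : MonoidAlgebra ℤ (Fin d)) (k : Fin d),
      (ρ g v).coeff k = v.coeff (g⁻¹ k) := fun g v k => Representation.coeff_ofMulAction g v k
  have hcoc : ∀ g h : Equiv.Perm (Fin d), F (g * h) = ρ g (F h) + F g :=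
    (mem_cocycles₁_iff (f : Equiv.Perm (Fin d) → _)).1 f.2
  have hone : F 1 = 0 := cocycles₁_map_one f
  set i0 : Fin d := ⟨0, by omega⟩ with hi0
  -- anti-invariance of f on swaps
  have hanti : ∀ a b k : Fin d, (F (swap a b)).coeff (swap a b k) = -((F (swap a b)).coeff k) := by
    intro a b k
    have h := hcoc (swap a b) (swap a b)
    rw [swap_mul_self, hone] at h
    have h2 := congrArg (fun v : MonoidAlgebra ℤ (Fin d) => v.coeff (swap a b k)) h.symm
    simp only [MonoidAlgebra.coeff_add, MonoidAlgebra.coeff_zero, Finsupp.coe_add, Pi.add_apply, hρ, Finsupp.coe_zero, Pi.zero_apply] at h2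
    rw [swap_inv, swap_apply_self] at h2
    linarith
  have hoff : ∀ a b k : Fin d, k ≠ a → k ≠ b → (F (swap a b)).coeff k = 0 := by
    intro a b k hka hkb
    have h := hanti a b k
    rw [swap_apply_of_ne_of_ne hka hkb] at h
    omega
  -- the candidate element
  set m : MonoidAlgebra ℤ (Fin d) :=
    MonoidAlgebra.ofCoeff (Finsupp.equivFunOnFinite.symm (fun j => (F (swap i0 j)).coeff i0)) with hm
  have hmval : ∀ j, m.coeff j = (F (swap i0 j)).coeff i0 := fun j => rfl
  have hm0 : m.coeff i0 = 0 := by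
    rw [hmval, swap_self]
    exact congrFun (congrArg (fun v : MonoidAlgebra ℤ (Fin d) => ⇑v.coeff) (hone : F (Equiv.refl (Fin d)) = 0)) i0
  -- key: f (swap a b) a = m b - m a   (for a ≠ b)
  have key : ∀ a b : Fin d, a ≠ b → (F (swap a b)).coeff a = m.coeff b - m.coeff a := by
    intro a b hab
    by_cases ha0 : a = i0
    · subst ha0
      rw [hmval b, hm0, sub_zero]
    · by_cases hb0 : b = i0
      · subst hb0
        rw [hm0]
        have h := hanti i0 a i0
        rw [swap_apply_left] at h
        rw [swap_comm, h, hmval a]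
        ring
      · have hdecomp : swap i0 a * swap i0 b * swap i0 a = swap a b := by
          rw [swap_comm i0 b]
          exact swap_mul_swap_mul_swap (x := b) (y := i0) (z := a)
            (fun h => hb0 h) (Ne.symm hab)
        have h1 := hcoc (swap i0 a * swap i0 b) (swap i0 a)
        have h2 := hcoc (swap i0 a) (swap i0 b)
        rw [hdecomp, h2] at h1
        have h3 := congrArg (fun v : MonoidAlgebra ℤ (Fin d) => v.coeff a) h1
        simp only [MonoidAlgebra.coeff_add, Finsupp.coe_add, Pi.add_apply, hρ, map_add, mul_inv_rev, swap_inv,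
          Equiv.Perm.mul_apply] at h3
        simp only [swap_apply_right, swap_apply_left] at h3
        have e1 : (F (swap i0 a)).coeff b = 0 :=
          hoff i0 a b (fun h => hb0 h) (fun h => hab h.symm)
        have e2 : (F (swap i0 a)).coeff a = - m.coeff a := by
          have h := hanti i0 a i0
          rw [swap_apply_left] at h
          rw [h, hmval a]
        rw [e1, e2, ← hmval b] at h3
        rw [h3]; ring
  -- main swap formula
  have hswap : ∀ a b k : Fin d, (F (swap a b)).coeff k = m.coeff (swap a b k) - m.coeff k := by
    intro a b k
    by_cases hab : a = b
    · subst hab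
      rw [swap_self]
      rw [show F (Equiv.refl (Fin d)) = 0 from hone]
      simp
    by_cases hka : k = a
    · subst hka
      rw [swap_apply_left]
      exact key k b hab
    by_cases hkb : k = b
    · subst hkb
      rw [swap_apply_right]
      have h := hanti a k a
      rw [swap_apply_left, key a k hab] at h
      rw [swap_comm] at h ⊢
      rw [h]; ring
    · rw [swap_apply_of_ne_of_ne hka hkb, hoff a b k hka hkb, sub_self]
  have hswapF : ∀ a b : Fin d, F (swap a b) = ρ (swap a b) m - m := by
    intro a b
    ext k
    rw [MonoidAlgebra.coeff_sub, Finsupp.sub_apply, hρ, swap_inv, hswap]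
  -- conclude by induction on swaps
  refine ⟨m, fun g => ?_⟩
  show ρ g m - m = F g
  refine Equiv.Perm.swap_induction_on g ?_ ?_
  · rw [map_one, hone]; exact sub_self m
  · intro p x y hxy ih
    rw [hcoc, ← ih, hswapF, map_mul]
    simp only [Module.End.mul_apply, map_sub]
    abel
end

section
/- For any integer d ≥ 2, the first group cohomology H¹(S_d, U_d) vanishes, where U_d is the free ℤ-module with basis {e_{i,j} : 1 ≤ i < j ≤ d} on which S_d acts by τ·e_{i,j} = e_{τ(i),τ(j)} (with indices reordered so the smaller index comes first). -/
open Pointwise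

/-- The set of 2-element subsets of `{1, ..., d}`, the basis of `U_d`. -/
def TwoSubsets (d : ℕ) : Type := {s : Finset (Fin d) // s.card = 2}

/-- `S_d` acts on 2-element subsets of `{1, ..., d}` by `τ • {i,j} = {τ i, τ j}`. -/
instance (d : ℕ) : MulAction (Equiv.Perm (Fin d)) (TwoSubsets d) where
  smul σ s := ⟨σ • s.1, by rw [Finset.card_smul_finset]; exact s.2⟩
  one_smul s := Subtype.ext (one_smul _ s.1)
  mul_smul a b s := Subtype.ext (mul_smul a b s.1)

noncomputable section Aux

instance (d : ℕ) : Fintype (TwoSubsets d) := by unfold TwoSubsets; infer_instance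
instance (d : ℕ) : DecidableEq (TwoSubsets d) := by unfold TwoSubsets; infer_instance

/-- The action of `S_d` on 2-subsets is transitive. -/
lemma TwoSubsets.exists_smul_eq {d : ℕ} (s t : TwoSubsets d) :
    ∃ σ : Equiv.Perm (Fin d), σ • s = t := by
  classical
  have hcard : Fintype.card {x // x ∈ s.1} = Fintype.card {x // x ∈ t.1} := by
    simp only [Fintype.card_coe, s.2, t.2]
  let e : {x // x ∈ s.1} ≃ {x // x ∈ t.1} := Fintype.equivOfCardEq hcard
  refine ⟨e.extendSubtype, Subtype.ext ?_⟩
  show e.extendSubtype • s.1 = t.1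
  apply Finset.eq_of_subset_of_card_le
  · intro a ha
    rw [Finset.mem_smul_finset] at ha
    obtain ⟨b, hb, rfl⟩ := ha
    exact e.extendSubtype_mem b hb
  · rw [Finset.card_smul_finset, s.2, t.2]

end Aux

/-- For `d ≥ 2`, `H¹(S_d, U_d) = 0`, where `U_d` is the free `ℤ`-module on the
2-element subsets `{i,j} ⊆ {1,...,d}` with `τ • e_{i,j} = e_{τ i, τ j}`. -/
theorem stmt_3 (d : ℕ) (hd : 2 ≤ d) :
    Subsingleton
      (groupCohomology.H1 (Rep.ofMulAction ℤ (Equiv.Perm (Fin d)) (TwoSubsets d))) := by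
  classical
  set G := Equiv.Perm (Fin d)
  set A := Rep.ofMulAction ℤ G (TwoSubsets d) with hA
  set R : G → (TwoSubsets d →₀ ℤ) →ₗ[ℤ] (TwoSubsets d →₀ ℤ) :=
    fun g => Finsupp.lmapDomain ℤ ℤ (fun x => g • x) with hR
  have hRapp : ∀ (g : G) (v : TwoSubsets d →₀ ℤ) (ω : TwoSubsets d), R g v ω = v (g⁻¹ • ω) := by
    intro g v ω
    have := Finsupp.mapDomain_apply (MulAction.injective g) v (g⁻¹ • ω)
    rw [smul_inv_smul] at this
    exact this
  have hRcoeff : ∀ (g : G) (x : A), (A.ρ g x).coeff = R g x.coeff := fun g x => rfl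
  refine ⟨fun a b => ?_⟩
  rw [← sub_eq_zero]
  generalize a - b = x
  induction x using groupCohomology.H1_induction_on with | h f => ?_
  rw [groupCohomology.H1π_eq_zero_iff]
  -- recast the cocycle as a function into the concrete Finsupp module
  let F : G → (TwoSubsets d →₀ ℤ) := fun g => (f g).coeff
  have hcoc : ∀ g h : G, F (g * h) = R g (F h) + F g := by
    intro g h
    have := congrArg MonoidAlgebra.coeff ((groupCohomology.mem_cocycles₁_iff (f : G → A)).1 f.2 g h)
    rw [MonoidAlgebra.coeff_add, hRcoeff] at this
    exact this
  set n : ℤ := (Fintype.card G : ℤ) with hn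
  have hn0 : n ≠ 0 := Nat.cast_ne_zero.2 Fintype.card_ne_zero
  -- the norm element
  set X : TwoSubsets d →₀ ℤ := ∑ g : G, F g with hX
  -- key identity : n • F g = X - R g X
  have key : ∀ g : G, n • F g = X - R g X := by
    intro g
    have h1 : ∑ h : G, F (g * h) = X := by
      rw [hX]
      exact Fintype.sum_equiv (Equiv.mulLeft g) _ _ (fun h => rfl)
    have h2 : ∑ h : G, F (g * h) = R g X + n • F g := by
      simp only [hcoc]
      rw [Finset.sum_add_distrib, hX, map_sum]
      congr 1
      rw [Finset.sum_const, Finset.card_univ, ← Nat.cast_smul_eq_nsmul ℤ]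
    rw [h1] at h2
    rw [eq_sub_iff_add_eq, add_comm]
    exact h2.symm
  -- pointwise version
  have keyω : ∀ (g : G) (ω : TwoSubsets d),
      n * F g ω = X ω - X (g⁻¹ • ω) := by
    intro g ω
    have := congrArg (fun v : TwoSubsets d →₀ ℤ => v ω) (key g)
    simpa [hRapp] using this
  -- base point
  have h0d : 0 < d := by omega
  have h1d : 1 < d := by omega
  have h01 : (⟨0, h0d⟩ : Fin d) ≠ ⟨1, h1d⟩ := by
    simp [Fin.ext_iff]
  set ω₀ : TwoSubsets d := ⟨{⟨0, h0d⟩, ⟨1, h1d⟩}, by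
    rw [Finset.card_insert_of_notMem (Finset.notMem_singleton.2 h01),
      Finset.card_singleton]⟩
  -- divisibility
  have hdvd : ∀ ω : TwoSubsets d, n ∣ X ω₀ - X ω := by
    intro ω
    obtain ⟨σ, hσ⟩ := TwoSubsets.exists_smul_eq ω ω₀
    have hω : σ⁻¹ • ω₀ = ω := by rw [← hσ, inv_smul_smul]
    refine ⟨F σ ω₀, ?_⟩
    rw [← hω]
    exact (keyω σ ω₀).symm
  -- the primitive
  set z : TwoSubsets d →₀ ℤ :=
    Finsupp.equivFunOnFinite.symm (fun ω => (X ω₀ - X ω) / n) with hz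
  have hzω : ∀ ω, n * z ω = X ω₀ - X ω := by
    intro ω
    have h : z ω = (X ω₀ - X ω) / n := rfl
    rw [h, Int.mul_ediv_cancel' (hdvd ω)]
  have main : ∀ g : G, R g z - z = F g := by
    intro g
    have h2 : n • (R g z - z) = n • F g := by
      ext ω
      have h1 : (R g z) ω = z (g⁻¹ • ω) := hRapp g z ω
      simp only [Finsupp.smul_apply, Finsupp.sub_apply, smul_eq_mul, mul_sub, h1,
        hzω, keyω g ω]
      ring
    exact smul_right_injective (TwoSubsets d →₀ ℤ) hn0 h2
  refine ⟨MonoidAlgebra.ofCoeff z, funext fun g => ?_⟩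
  apply MonoidAlgebra.coeffEquiv.injective
  rw [groupCohomology.d₀₁_hom_apply]
  show (A.ρ g (MonoidAlgebra.ofCoeff z) - MonoidAlgebra.ofCoeff z).coeff = F g
  rw [MonoidAlgebra.coeff_sub, hRcoeff]
  exact main g
end
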